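/- arXiv:1201.5260 — 3 statements merged into one kernel-verified Lean document; each statement's English description precedes it below -/
import Mathlib

section
/- Fix a word w ∈ F_2 and a prime p. If the family of word maps P_{w,q}: SL(2,q) × SL(2,q) → SL(2,q), q = p^n, is p-equidistributed, then the family of induced word maps on the quotient groups PSL(2,q) = SL(2,q)/{±1}, q = p^n, is also p-equidistributed. -/
open Matrix Polynomial

abbrev SL2 (K : Type) [CommRing K] : Type := Matrix.SpecialLinearGroup (Fin 2) K

abbrev PSL2 (K : Type) [CommRing K] : Type := SL2 K ⧸ Subgroup.center (SL2 K)

/-- Evaluation of a word `w ∈ F₂` at a pair of group elements. -/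
def wordEval {G : Type*} [Group G] (w : FreeGroup (Fin 2)) (g₁ g₂ : G) : G :=
  (FreeGroup.lift ![g₁, g₂]) w

/-- The word map `P_{w,G} : G × G → G` for `G = SL(2,K)`. -/
def wordMap (w : FreeGroup (Fin 2)) (K : Type) [CommRing K] :
    SL2 K × SL2 K → SL2 K := fun g => wordEval w g.1 g.2

/-- The point `(tr x, tr xy, tr y)`. -/
def trPoint {K : Type} [CommRing K] (x y : SL2 K) : Fin 3 → K :=
  ![Matrix.trace (x : Matrix (Fin 2) (Fin 2) K),
    Matrix.trace ((x * y : SL2 K) : Matrix (Fin 2) (Fin 2) K),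
    Matrix.trace (y : Matrix (Fin 2) (Fin 2) K)]

/-- `f ∈ ℤ[s,u,t]` is the trace polynomial of the word `w`. -/
def IsTracePolynomial (w : FreeGroup (Fin 2)) (f : MvPolynomial (Fin 3) ℤ) : Prop :=
  ∀ (K : Type) [CommRing K], ∀ x y : SL2 K,
    Matrix.trace ((wordEval w x y : SL2 K) : Matrix (Fin 2) (Fin 2) K) =
      MvPolynomial.eval (trPoint x y) (MvPolynomial.map (Int.castRingHom K) f)

/-- `f : X → Y` is `ε`-equidistributed. -/
def IsEquidistributed {X Y : Type*} (f : X → Y) (ε : ℝ) : Prop :=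
  ∃ Y' : Set Y,
    (1 - ε) * (Nat.card Y) < (Nat.card Y' : ℝ) ∧
    ∀ y ∈ Y',
      |(Nat.card {x : X // f x = y} : ℝ) - (Nat.card X : ℝ) / (Nat.card Y)| <
        ε * (Nat.card X) / (Nat.card Y)

/-- The family of word maps on `SL(2,p^n)` is `p`-equidistributed. -/
def IsPEquidistributed (w : FreeGroup (Fin 2)) (p : ℕ) (hp : p.Prime) : Prop :=
  letI : Fact p.Prime := ⟨hp⟩
  ∃ ε : ℕ → ℝ,
    Filter.Tendsto (fun n : ℕ => ε (p ^ n)) Filter.atTop (nhds 0) ∧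
    ∀ᶠ n : ℕ in Filter.atTop,
      IsEquidistributed (wordMap w (GaloisField p n)) (ε (p ^ n))

/-- The family of word maps on `SL(2,q)`, `q` ranging over all prime powers,
is equidistributed. -/
def IsEquidistributedFamily (w : FreeGroup (Fin 2)) : Prop :=
  ∃ ε : ℕ → ℝ,
    Filter.Tendsto ε Filter.atTop (nhds 0) ∧
    ∀ (p : ℕ) (hp : p.Prime),
      letI : Fact p.Prime := ⟨hp⟩
      ∀ᶠ n : ℕ in Filter.atTop,
        IsEquidistributed (wordMap w (GaloisField p n)) (ε (p ^ n))

/-- Reduction of an integral polynomial mod `p`. -/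
noncomputable def reduceMod (p : ℕ) (P : MvPolynomial (Fin 3) ℤ) : MvPolynomial (Fin 3) (ZMod p) :=
  MvPolynomial.map (Int.castRingHom (ZMod p)) P

/-- `P = h ∘ Q` with `deg Q ≥ 1`, `deg h ≥ 2`. -/
def IsCompositePoly (F : Type) [CommRing F] (P : MvPolynomial (Fin 3) F) : Prop :=
  ∃ (Q : MvPolynomial (Fin 3) F) (h : Polynomial F),
    1 ≤ Q.totalDegree ∧ 2 ≤ h.natDegree ∧ P = Polynomial.aeval Q h

def IsPComposite (p : ℕ) (P : MvPolynomial (Fin 3) ℤ) : Prop :=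
  IsCompositePoly (ZMod p) (reduceMod p P)

/-- `h` is a permutation polynomial of every finite extension of `F_p`. -/
def IsPermAllExt (p : ℕ) (h : Polynomial (ZMod p)) : Prop :=
  ∀ (K : Type) [Field K] [Algebra (ZMod p) K] [Finite K],
    Function.Bijective fun z : K => Polynomial.aeval z h

def IsPSpecial (p : ℕ) (P : MvPolynomial (Fin 3) ℤ) : Prop :=
  IsPComposite p P ∧
    ∃ (Q : MvPolynomial (Fin 3) (ZMod p)) (h : Polynomial (ZMod p)),
      1 ≤ Q.totalDegree ∧ 2 ≤ h.natDegree ∧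
      reduceMod p P = Polynomial.aeval Q h ∧ IsPermAllExt p h

def AlmostNoncomposite (P : MvPolynomial (Fin 3) ℤ) : Prop :=
  ∀ p : ℕ, p.Prime → ¬ IsPComposite p P ∨ IsPSpecial p P

/-- The reduced word `x^{a₁}y^{b₁} ⋯ x^{a_r}y^{b_r}`. -/
def wordOf {r : ℕ} (a b : Fin r → ℤ) : FreeGroup (Fin 2) :=
  (List.ofFn fun i : Fin r =>
    FreeGroup.of (0 : Fin 2) ^ a i * FreeGroup.of (1 : Fin 2) ^ b i).prod

/-- The word map on `PSL(2,q) = SL(2,q)/{±1}` (the quotient of `SL(2,q)` by its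
center, which for `2 × 2` matrices over a field is exactly `{±1}`). -/
def wordMapPSL (w : FreeGroup (Fin 2)) (K : Type) [CommRing K] :
    PSL2 K × PSL2 K → PSL2 K := fun g => wordEval w g.1 g.2

/-- The family of induced word maps on `PSL(2,p^n)` is `p`-equidistributed. -/
def IsPEquidistributedPSL (w : FreeGroup (Fin 2)) (p : ℕ) (hp : p.Prime) : Prop :=
  letI : Fact p.Prime := ⟨hp⟩
  ∃ ε : ℕ → ℝ,
    Filter.Tendsto (fun n : ℕ => ε (p ^ n)) Filter.atTop (nhds 0) ∧
    ∀ᶠ n : ℕ in Filter.atTop,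
      IsEquidistributed (wordMapPSL w (GaloisField p n)) (ε (p ^ n))


section PslAux

lemma wordEval_map {G H : Type*} [Group G] [Group H] (φ : G →* H) (w : FreeGroup (Fin 2))
    (g₁ g₂ : G) : φ (wordEval w g₁ g₂) = wordEval w (φ g₁) (φ g₂) := by
  have h : φ.comp (FreeGroup.lift ![g₁, g₂]) = FreeGroup.lift ![φ g₁, φ g₂] := by
    apply FreeGroup.ext_hom
    intro a
    fin_cases a <;> simp
  simpa [wordEval] using DFunLike.congr_fun h w

def fiberSigmaEquiv {X Y : Type*} (f : X → Y) (P : Y → Prop) :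
    {x : X // P (f x)} ≃ Σ y : {y : Y // P y}, {x : X // f x = y.1} where
  toFun x := ⟨⟨f x.1, x.2⟩, ⟨x.1, rfl⟩⟩
  invFun s := ⟨s.2.1, by rw [s.2.2]; exact s.1.2⟩
  left_inv x := rfl
  right_inv := by rintro ⟨⟨y, hy⟩, ⟨x, hx⟩⟩; dsimp only at hx; subst hx; rfl

lemma nat_card_sigma {ι : Type*} [Fintype ι] (g : ι → Type*) [∀ i, Finite (g i)] :
    Nat.card (Σ i, g i) = ∑ i, Nat.card (g i) := by
  haveI : ∀ i, Fintype (g i) := fun i => Fintype.ofFinite _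
  simp [Nat.card_eq_fintype_card]

lemma card_comp_sum {X Y : Type*} [Finite X] [Finite Y] (f : X → Y) (P : Y → Prop)
    [Fintype {y : Y // P y}] :
    Nat.card {x : X // P (f x)} = ∑ y : {y : Y // P y}, Nat.card {x : X // f x = y.1} := by
  rw [Nat.card_congr (fiberSigmaEquiv f P), nat_card_sigma]

lemma card_eq_mul_of_fibers {X Y : Type*} [Finite X] [Finite Y] (f : X → Y) (k : ℕ)
    (hk : ∀ y : Y, Nat.card {x : X // f x = y} = k) (P : Y → Prop) :
    Nat.card {x : X // P (f x)} = k * Nat.card {y : Y // P y} := by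
  classical
  haveI := Fintype.ofFinite Y
  rw [card_comp_sum f P]
  simp [hk, Finset.sum_const, Nat.card_eq_fintype_card, mul_comm]

lemma card_mk_fiber {G : Type*} [Group G] [Finite G] (Z : Subgroup G) (y : G ⧸ Z) :
    Nat.card {g : G // QuotientGroup.mk g = y} = Nat.card Z := by
  have e1 : {g : G // QuotientGroup.mk g = y} ≃ (QuotientGroup.mk ⁻¹' ({y} : Set (G ⧸ Z))) :=
    Equiv.subtypeEquivRight (by simp)
  rw [Nat.card_congr e1, Nat.card_congr (QuotientGroup.preimageMkEquivSubgroupProdSet Z {y}),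
    Nat.card_prod]
  simp

set_option maxHeartbeats 1000000 in
lemma psl_step (w : FreeGroup (Fin 2)) (K : Type) [Field K] [Finite K] {ε : ℝ}
    (h : IsEquidistributed (wordMap w K) ε) :
    IsEquidistributed (wordMapPSL w K) (2 * ε) := by
  classical
  haveI : Fintype K := Fintype.ofFinite K
  set Z := Subgroup.center (SL2 K) with hZ
  set c := Nat.card Z with hcdef
  set N := Nat.card (SL2 K) with hNdef
  set M := Nat.card (PSL2 K) with hMdef
  have hM : 0 < M := Nat.card_pos
  have hN : 0 < N := Nat.card_pos
  have hc1 : 0 < c := Nat.card_pos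
  have hc2 : c ≤ 2 := by
    rw [hcdef, hZ, Nat.card_congr (Matrix.SpecialLinearGroup.center_equiv_rootsOfUnity).toEquiv]
    have h2 : (Fintype.card (Fin 2) ⊔ 1) = 2 := by simp
    rw [h2]
    exact card_rootsOfUnity (R := K) (k := 2)
  have hNM : N = M * c := Subgroup.card_eq_card_quotient_mul_card_subgroup Z
  have hMr : (0:ℝ) < M := by exact_mod_cast hM
  have hNr : (0:ℝ) < N := by exact_mod_cast hN
  have hcr : (0:ℝ) < c := by exact_mod_cast hc1
  have hNMr : (N:ℝ) = M * c := by exact_mod_cast hNM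
  obtain ⟨Y', hY'c, hY'⟩ := h
  have hY'le : Nat.card Y' ≤ N := Nat.card_le_card_of_injective _ Subtype.val_injective
  have hε : 0 < ε := by
    have h1 : (Nat.card Y' : ℝ) ≤ N := by exact_mod_cast hY'le
    nlinarith [hY'c]
  refine ⟨{y : PSL2 K | ∀ g : SL2 K, (QuotientGroup.mk g : PSL2 K) = y → g ∈ Y'}, ?_, ?_⟩
  · -- cardinality of the good set
    set S : Set (PSL2 K) := {y | ∀ g : SL2 K, (QuotientGroup.mk g : PSL2 K) = y → g ∈ Y'}
    have hsub : Sᶜ ⊆ (QuotientGroup.mk : SL2 K → PSL2 K) '' Y'ᶜ := by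
      intro y hy
      simp only [S, Set.mem_compl_iff, Set.mem_setOf_eq, not_forall] at hy
      obtain ⟨g, hg1, hg2⟩ := hy
      exact ⟨g, hg2, hg1⟩
    have h1 : S.ncard + Sᶜ.ncard = M := Set.ncard_add_ncard_compl S
    have h2 : Y'.ncard + Y'ᶜ.ncard = N := Set.ncard_add_ncard_compl Y'
    have h3 : Sᶜ.ncard ≤ Y'ᶜ.ncard :=
      le_trans (Set.ncard_le_ncard hsub (Set.toFinite _)) (Set.ncard_image_le (Set.toFinite _))
    rw [Nat.card_coe_set_eq]
    rw [Nat.card_coe_set_eq] at hY'c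
    have c1 : (S.ncard : ℝ) + Sᶜ.ncard = M := by exact_mod_cast h1
    have c2 : (Y'.ncard : ℝ) + Y'ᶜ.ncard = N := by exact_mod_cast h2
    have c3 : (Sᶜ.ncard : ℝ) ≤ Y'ᶜ.ncard := by exact_mod_cast h3
    have hεN : ε * (N:ℝ) ≤ 2 * ε * M := by
      rw [hNMr]
      have h2c : (c:ℝ) ≤ 2 := by exact_mod_cast hc2
      have h4 := mul_le_mul_of_nonneg_left h2c (le_of_lt (mul_pos hε hMr))
      nlinarith
    nlinarith
  · -- fiber bounds
    intro y hy
    simp only [Set.mem_setOf_eq] at hy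
    have hq : ∀ z : PSL2 K × PSL2 K,
        Nat.card {x : SL2 K × SL2 K //
          ((QuotientGroup.mk x.1 : PSL2 K), (QuotientGroup.mk x.2 : PSL2 K)) = z} = c * c := by
      intro z
      have e : {x : SL2 K × SL2 K //
            ((QuotientGroup.mk x.1 : PSL2 K), (QuotientGroup.mk x.2 : PSL2 K)) = z} ≃
          {a : SL2 K // (QuotientGroup.mk a : PSL2 K) = z.1} ×
          {b : SL2 K // (QuotientGroup.mk b : PSL2 K) = z.2} :=
        (Equiv.subtypeEquivRight (fun x => by rw [Prod.ext_iff])).trans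
          Equiv.subtypeProdEquivProd
      rw [Nat.card_congr e, Nat.card_prod, card_mk_fiber, card_mk_fiber]
    have hA : Nat.card {x : SL2 K × SL2 K //
          wordMapPSL w K ((QuotientGroup.mk x.1 : PSL2 K), (QuotientGroup.mk x.2 : PSL2 K)) = y}
        = (c * c) * Nat.card {z : PSL2 K × PSL2 K // wordMapPSL w K z = y} :=
      card_eq_mul_of_fibers
        (fun x : SL2 K × SL2 K =>
          ((QuotientGroup.mk x.1 : PSL2 K), (QuotientGroup.mk x.2 : PSL2 K)))
        (c * c) hq (fun z => wordMapPSL w K z = y)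
    have hcomm : ∀ x : SL2 K × SL2 K,
        wordMapPSL w K ((QuotientGroup.mk x.1 : PSL2 K), (QuotientGroup.mk x.2 : PSL2 K))
          = (QuotientGroup.mk (wordMap w K x) : PSL2 K) := by
      intro x
      exact (wordEval_map (QuotientGroup.mk' Z) w x.1 x.2).symm
    have hB : Nat.card {x : SL2 K × SL2 K //
          wordMapPSL w K ((QuotientGroup.mk x.1 : PSL2 K), (QuotientGroup.mk x.2 : PSL2 K)) = y}
        = ∑ g : {g : SL2 K // (QuotientGroup.mk g : PSL2 K) = y},
            Nat.card {x : SL2 K × SL2 K // wordMap w K x = g.1} := by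
      have e : {x : SL2 K × SL2 K //
            wordMapPSL w K ((QuotientGroup.mk x.1 : PSL2 K), (QuotientGroup.mk x.2 : PSL2 K)) = y}
          ≃ {x : SL2 K × SL2 K // (QuotientGroup.mk (wordMap w K x) : PSL2 K) = y} :=
        Equiv.subtypeEquivRight (fun x => by rw [hcomm])
      rw [Nat.card_congr e,
        card_comp_sum (wordMap w K) (fun g => (QuotientGroup.mk g : PSL2 K) = y)]
    have hI : Fintype.card {g : SL2 K // (QuotientGroup.mk g : PSL2 K) = y} = c := by
      rw [← Nat.card_eq_fintype_card, card_mk_fiber]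
    haveI : Nonempty {g : SL2 K // (QuotientGroup.mk g : PSL2 K) = y} := by
      rw [← Fintype.card_pos_iff, hI]; exact hc1
    set fib : ℝ := (Nat.card {x : PSL2 K × PSL2 K // wordMapPSL w K x = y} : ℝ) with hfib
    have hXN : (Nat.card (SL2 K × SL2 K) : ℝ) = (N:ℝ) * N := by
      rw [Nat.card_prod]; push_cast; rfl
    have hNne : (N:ℝ) ≠ 0 := ne_of_gt hNr
    have hNN : ∀ g : SL2 K, g ∈ Y' →
        |(Nat.card {x : SL2 K × SL2 K // wordMap w K x = g} : ℝ) - N| < ε * N := by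
      intro g hg
      have hb := hY' g hg
      have e2 : ε * (Nat.card (SL2 K × SL2 K) : ℝ) / (Nat.card (SL2 K) : ℝ) = ε * N := by
        rw [hXN, ← hNdef, mul_div_assoc, mul_div_assoc, div_self hNne, mul_one]
      have e1 : (Nat.card (SL2 K × SL2 K) : ℝ) / (Nat.card (SL2 K) : ℝ) = (N:ℝ) := by
        rw [hXN, ← hNdef, mul_div_assoc, div_self hNne, mul_one]
      rw [e2, e1] at hb
      exact hb
    set T : {g : SL2 K // (QuotientGroup.mk g : PSL2 K) = y} → ℝ :=
      fun g => (Nat.card {x : SL2 K × SL2 K // wordMap w K x = g.1} : ℝ) with hT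
    have hsum1 : ∑ g, T g = (c:ℝ) * c * fib := by
      rw [hT, hfib]
      beta_reduce
      exact_mod_cast hB.symm.trans hA
    have habs : |∑ g, (T g - (N:ℝ))| ≤ ∑ g, |T g - (N:ℝ)| := Finset.abs_sum_le_sum_abs _ _
    have hlt : ∑ g, |T g - (N:ℝ)| < ∑ _g : {g : SL2 K // (QuotientGroup.mk g : PSL2 K) = y},
        ε * (N:ℝ) :=
      Finset.sum_lt_sum_of_nonempty Finset.univ_nonempty
        (fun g _ => hNN g.1 (hy g.1 g.2))
    have hconst : ∑ _g : {g : SL2 K // (QuotientGroup.mk g : PSL2 K) = y}, ε * (N:ℝ)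
        = (c:ℝ) * (ε * N) := by
      rw [Finset.sum_const, Finset.card_univ, hI, nsmul_eq_mul]
    have hsubsum : ∑ g, (T g - (N:ℝ)) = (c:ℝ) * c * fib - c * N := by
      rw [Finset.sum_sub_distrib, hsum1, Finset.sum_const, Finset.card_univ, hI, nsmul_eq_mul]
    have hkey : |(c:ℝ) * c * fib - c * N| < (c:ℝ) * (ε * N) := by
      rw [← hsubsum, ← hconst] at *
      exact lt_of_le_of_lt habs hlt
    have hstep1 : |(c:ℝ) * fib - N| < ε * N := by
      have hfac : (c:ℝ) * c * fib - c * N = c * ((c:ℝ) * fib - N) := by ring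
      rw [hfac, abs_mul, abs_of_pos hcr] at hkey
      exact lt_of_mul_lt_mul_left hkey (le_of_lt hcr)
    have hstep2 : |fib - (M:ℝ)| < ε * M := by
      have hfac : (c:ℝ) * fib - N = c * (fib - M) := by rw [hNMr]; ring
      have hfac2 : ε * (N:ℝ) = c * (ε * M) := by rw [hNMr]; ring
      rw [hfac, hfac2, abs_mul, abs_of_pos hcr] at hstep1
      exact lt_of_mul_lt_mul_left hstep1 (le_of_lt hcr)
    have hXM : (Nat.card (PSL2 K × PSL2 K) : ℝ) = (M:ℝ) * M := by
      rw [Nat.card_prod]; push_cast; rfl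
    have hMne : (M:ℝ) ≠ 0 := ne_of_gt hMr
    have e1 : (Nat.card (PSL2 K × PSL2 K) : ℝ) / (Nat.card (PSL2 K) : ℝ) = (M:ℝ) := by
      rw [hXM, ← hMdef, mul_div_assoc, div_self hMne, mul_one]
    have e2 : 2 * ε * (Nat.card (PSL2 K × PSL2 K) : ℝ) / (Nat.card (PSL2 K) : ℝ)
        = 2 * ε * M := by
      rw [hXM, ← hMdef, mul_div_assoc, mul_div_assoc, div_self hMne, mul_one]
    rw [e2, e1]
    have : ε * (M:ℝ) < 2 * ε * M := by nlinarith
    exact lt_trans hstep2 this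

end PslAux

theorem psl_p_equidistributed_of_sl (w : FreeGroup (Fin 2)) (p : ℕ) (hp : p.Prime)
    (h : IsPEquidistributed w p hp) :
    IsPEquidistributedPSL w p hp := by
  haveI : Fact p.Prime := ⟨hp⟩
  obtain ⟨ε, hε, hev⟩ := h
  refine ⟨fun m => 2 * ε m, ?_, ?_⟩
  · simpa using hε.const_mul (2:ℝ)
  · exact hev.mono fun n hn => psl_step w (GaloisField p n) hn
end

section
/- Let F be an algebraically closed field of characteristic p > 0 and let n be a positive integer divisible by p. Suppose D_n = h ∘ g, where h, g ∈ F[x] are monic polynomials with deg h ≥ 2 and deg g ≥ 1. Then there exist positive integers m, k with mk = n and an element c ∈ F such that h(x) = D_m(x − c) and g(x) = D_k(x) + c. -/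
open Matrix Polynomial

namespace DicksonAux

open Polynomial LaurentPolynomial

theorem dickson_natDegree_le {R : Type*} [CommRing R] : ∀ n : ℕ,
    (dickson 1 (1 : R) n).natDegree ≤ n
  | 0 => by
    rw [dickson_zero]
    have : ((3 : R[X]) - (1 : ℕ)) = 2 := by push_cast; ring
    rw [this]
    simp
  | 1 => by simpa using natDegree_X_le
  | n + 2 => by
    rw [dickson_add_two]
    refine (natDegree_sub_le _ _).trans ?_
    simp only [max_le_iff]
    constructor
    · exact (natDegree_mul_le).trans (by
        have h1 := dickson_natDegree_le (R := R) (n + 1)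
        have h2 := natDegree_X_le (R := R)
        omega)
    · exact (natDegree_mul_le).trans (by
        have h1 := dickson_natDegree_le (R := R) n
        have h2 := Polynomial.natDegree_C (1 : R) ▸ le_refl (natDegree (Polynomial.C (1:R)))
        simp only [natDegree_C] at *
        omega)

theorem dickson_monic_natDegree {R : Type*} [CommRing R] [Nontrivial R] : ∀ n : ℕ,
    (dickson 1 (1 : R) (n + 1)).Monic ∧ (dickson 1 (1 : R) (n + 1)).natDegree = n + 1
  | 0 => by simp [monic_X]
  | n + 1 => by
    obtain ⟨ihm, ihd⟩ := dickson_monic_natDegree (R := R) n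
    rw [dickson_add_two]
    have hmul : (X * dickson 1 (1 : R) (n + 1)).Monic := monic_X.mul ihm
    have hdmul : (X * dickson 1 (1 : R) (n + 1)).natDegree = n + 2 := by
      rw [monic_X.natDegree_mul ihm, natDegree_X, ihd]; omega
    have hq : (Polynomial.C 1 * dickson 1 (1 : R) n).natDegree < n + 2 := by
      refine lt_of_le_of_lt (natDegree_mul_le.trans ?_) (by omega : n + 1 < n + 2)
      simp only [natDegree_C]
      have := dickson_natDegree_le (R := R) n
      omega
    have hdeg : (Polynomial.C 1 * dickson 1 (1 : R) n).degree < (X * dickson 1 (1 : R) (n + 1)).degree :=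
      degree_lt_degree (by omega)
    exact ⟨hmul.sub_of_left hdeg, by
      rw [natDegree_sub_eq_left_of_natDegree_lt (by omega : (Polynomial.C 1 * dickson 1 (1 : R) n).natDegree < (X * dickson 1 (1 : R) (n+1)).natDegree), hdmul]⟩

noncomputable section

variable (F : Type*) [Field F]

/-- The element `T + T⁻¹` of the Laurent polynomial ring. -/
def uu : F[T;T⁻¹] := T 1 + T (-1)

variable {F}

instance : CoeFun F[T;T⁻¹] (fun _ => ℤ → F) := ⟨fun f => f.coeff⟩

theorem one_apply (z : ℤ) : (1 : F[T;T⁻¹]) z = if z = 0 then 1 else 0 := by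
  rw [← LaurentPolynomial.T_zero, LaurentPolynomial.T_apply]
  simp [eq_comm]

theorem mul_T_apply (f : F[T;T⁻¹]) (n z : ℤ) : ((f * T n : F[T;T⁻¹])) z = f (z - n) := by
  have h : ((f * T n : F[T;T⁻¹])) z = f (z - n) * 1 :=
    AddMonoidAlgebra.coeff_mul_single_apply f 1 n z
  simpa using h

theorem mul_uu_apply (f : F[T;T⁻¹]) (z : ℤ) : (f * uu F) z = f (z - 1) + f (z + 1) := by
  rw [uu, mul_add, AddMonoidAlgebra.coeff_add, Finsupp.add_apply, mul_T_apply, mul_T_apply, sub_neg_eq_add]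

theorem uu_pow_apply (i : ℕ) :
    ((uu F ^ i) (i : ℤ) = 1 ∧ (uu F ^ i) (-(i : ℤ)) = 1) ∧
      ∀ z : ℤ, (z < -(i : ℤ) ∨ (i : ℤ) < z) → (uu F ^ i) z = 0 := by
  induction i with
  | zero =>
    refine ⟨⟨?_, ?_⟩, fun z hz => ?_⟩ <;>
      simp only [pow_zero, Nat.cast_zero, neg_zero, one_apply]
    · simp
    · simp
    · rw [if_neg (by omega)]
  | succ i ih =>
    have hstep : ∀ z : ℤ, (uu F ^ (i + 1)) z = (uu F ^ i) (z - 1) + (uu F ^ i) (z + 1) := by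
      intro z
      rw [pow_succ, mul_uu_apply]
    obtain ⟨⟨ht, hb⟩, hs⟩ := ih
    refine ⟨⟨?_, ?_⟩, fun z hz => ?_⟩
    · rw [hstep]
      push_cast
      rw [show ((i:ℤ) + 1 - 1) = (i:ℤ) by ring, ht, hs ((i:ℤ)+1+1) (by omega)]
      ring
    · rw [hstep]
      push_cast
      rw [show (-((i:ℤ) + 1) + 1) = -(i:ℤ) by ring, hb, hs (-((i:ℤ)+1)-1) (by omega)]
      ring
    · rw [hstep, hs (z-1) (by push_cast at hz ⊢; omega), hs (z+1) (by push_cast at hz ⊢; omega)]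
      ring

theorem uu_pow_apply_self (i : ℕ) : (uu F ^ i) (i : ℤ) = 1 := (uu_pow_apply i).1.1
theorem uu_pow_apply_neg_self (i : ℕ) : (uu F ^ i) (-(i : ℤ)) = 1 := (uu_pow_apply i).1.2
theorem uu_pow_apply_eq_zero {i : ℕ} {z : ℤ} (hz : z < -(i : ℤ) ∨ (i : ℤ) < z) :
    (uu F ^ i) z = 0 := (uu_pow_apply i).2 z hz


theorem aeval_uu_apply (f : F[X]) (z : ℤ) :
    (Polynomial.aeval (uu F) f : F[T;T⁻¹]) z
      = ∑ i ∈ Finset.range (f.natDegree + 1), f.coeff i * ((uu F ^ i : F[T;T⁻¹]) z) := by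
  rw [Polynomial.aeval_eq_sum_range]
  rw [AddMonoidAlgebra.coeff_sum, Finsupp.finset_sum_apply]
  refine Finset.sum_congr rfl fun i _ => ?_
  rw [AddMonoidAlgebra.coeff_smul_apply, smul_eq_mul]

theorem aeval_uu_support (f : F[X]) {z : ℤ}
    (hz : z < -(f.natDegree : ℤ) ∨ (f.natDegree : ℤ) < z) :
    (Polynomial.aeval (uu F) f : F[T;T⁻¹]) z = 0 := by
  rw [aeval_uu_apply]
  refine Finset.sum_eq_zero fun i hi => ?_
  rw [Finset.mem_range] at hi
  rw [uu_pow_apply_eq_zero (by rcases hz with h | h <;> [left; right] <;> push_cast <;> omega), mul_zero]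

theorem aeval_uu_top (f : F[X]) :
    (Polynomial.aeval (uu F) f : F[T;T⁻¹]) (f.natDegree : ℤ) = f.leadingCoeff := by
  rw [aeval_uu_apply]
  rw [Finset.sum_eq_single f.natDegree]
  · rw [uu_pow_apply_self, mul_one]; rfl
  · intro i hi hne
    rw [Finset.mem_range] at hi
    rw [uu_pow_apply_eq_zero (by right; push_cast; omega), mul_zero]
  · intro hmem; exact absurd (Finset.self_mem_range_succ _) hmem

theorem aeval_uu_bot (f : F[X]) :
    (Polynomial.aeval (uu F) f : F[T;T⁻¹]) (-(f.natDegree : ℤ)) = f.leadingCoeff := by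
  rw [aeval_uu_apply]
  rw [Finset.sum_eq_single f.natDegree]
  · rw [uu_pow_apply_neg_self, mul_one]; rfl
  · intro i hi hne
    rw [Finset.mem_range] at hi
    rw [uu_pow_apply_eq_zero (by left; push_cast; omega), mul_zero]
  · intro hmem; exact absurd (Finset.self_mem_range_succ _) hmem

theorem aeval_uu_injective :
    Function.Injective (fun f : F[X] => (Polynomial.aeval (uu F) f : F[T;T⁻¹])) := by
  intro f g hfg
  by_contra hne
  have hsub : f - g ≠ 0 := sub_ne_zero.2 hne
  simp only [] at hfg
  have h0 : (Polynomial.aeval (uu F) (f - g) : F[T;T⁻¹]) = 0 := by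
    rw [map_sub, hfg, sub_self]
  have htop := aeval_uu_top (f - g)
  rw [h0] at htop
  have : (0 : F[T;T⁻¹]) ((f-g).natDegree : ℤ) = 0 := rfl
  rw [this] at htop
  exact hsub (leadingCoeff_eq_zero.1 htop.symm)

theorem aeval_uu_dickson (n : ℕ) :
    Polynomial.aeval (uu F) (dickson 1 (1 : F) n) = (T (n : ℤ) + T (-(n : ℤ)) : F[T;T⁻¹]) := by
  rw [Polynomial.aeval_def, ← Polynomial.eval_map, map_dickson, _root_.map_one]
  have h1 : (T 1 : F[T;T⁻¹]) * T (-1) = 1 := by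
    rw [← T_add]; norm_num
  rw [show uu F = T 1 + T (-1) from rfl,
    dickson_one_one_eval_add_inv (T 1 : F[T;T⁻¹]) (T (-1)) h1 n, T_pow, T_pow]
  norm_num

theorem mul_apply_bound {f g : F[T;T⁻¹]} {s t : ℤ} (hf : ∀ z, s < z → f z = 0)
    (hg : ∀ z, t < z → g z = 0) : ∀ z, s + t < z → ((f * g : F[T;T⁻¹])) z = 0 := by
  intro z hz
  by_contra hne
  have hmem := AddMonoidAlgebra.support_coeff_mul_subset f g (Finsupp.mem_support_iff.2 hne)
  rw [Finset.mem_add] at hmem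
  obtain ⟨x, hx, y, hy, hxy⟩ := hmem
  rw [Finsupp.mem_support_iff] at hx hy
  have hxs : x ≤ s := by by_contra hh; exact hx (hf x (by omega))
  have hyt : y ≤ t := by by_contra hh; exact hy (hg y (by omega))
  omega

theorem pow_apply_bound {f : F[T;T⁻¹]} {s : ℤ} (hf : ∀ z, s < z → f z = 0) (m : ℕ) :
    ∀ z, (m : ℤ) * s < z → ((f ^ m : F[T;T⁻¹])) z = 0 := by
  induction m with
  | zero =>
    intro z hz
    rw [pow_zero]
    rw [show (1 : F[T;T⁻¹]) = T 0 from (T_zero).symm, T_apply, if_neg (by push_cast at hz; omega)]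
  | succ m ih =>
    intro z hz
    rw [pow_succ]
    exact mul_apply_bound ih hf z (by push_cast at hz ⊢; nlinarith)

theorem dickson_monic {R : Type*} [CommRing R] [Nontrivial R] {n : ℕ} (hn : 1 ≤ n) :
    (dickson 1 (1 : R) n).Monic := by
  have := (dickson_monic_natDegree (R := R) (n-1)).1
  rwa [Nat.sub_add_cancel hn] at this

theorem dickson_natDegree {R : Type*} [CommRing R] [Nontrivial R] {n : ℕ} (hn : 1 ≤ n) :
    (dickson 1 (1 : R) n).natDegree = n := by
  have := (dickson_monic_natDegree (R := R) (n-1)).2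
  rwa [Nat.sub_add_cancel hn] at this

theorem mul_natCast_apply (f : F[T;T⁻¹]) (c : ℕ) (z : ℤ) :
    ((f * (c : F[T;T⁻¹]) : F[T;T⁻¹])) z = f z * (c : F) := by
  have h : ((f * LaurentPolynomial.C ((c : F)) : F[T;T⁻¹])) z = f (z - 0) * (c : F) :=
    AddMonoidAlgebra.coeff_mul_single_apply f _ 0 z
  rw [map_natCast (LaurentPolynomial.C : F →+* F[T;T⁻¹]) c] at h
  simpa using h

theorem term_apply (E : F[T;T⁻¹]) (q : ℕ) (mb : ℤ) (c : ℕ) (z : ℤ) :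
    ((T mb * E ^ q * (c : F[T;T⁻¹]) : F[T;T⁻¹])) z = (E ^ q : F[T;T⁻¹]) (z - mb) * (c : F) := by
  rw [show (T mb * E ^ q * (c : F[T;T⁻¹]) : F[T;T⁻¹])
      = (E ^ q * (c : F[T;T⁻¹])) * T mb by ring, mul_T_apply, mul_natCast_apply]

theorem tame {F : Type} [Field F] (p : ℕ) (hp : p.Prime) [CharP F p]
    {a b : ℕ} (ha : 1 ≤ a) (hb : 1 ≤ b) (hpa : ¬ p ∣ a)
    {h g : F[X]} (hm : h.Monic) (gm : g.Monic)
    (hdh : h.natDegree = a) (hdg : g.natDegree = b)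
    (heq : h.comp g = dickson 1 (1 : F) (a * b)) :
    ∃ c : F, h = (dickson 1 (1 : F) a).comp (X - Polynomial.C c)
      ∧ g = dickson 1 (1 : F) b + Polynomial.C c := by
  set G : F[T;T⁻¹] := Polynomial.aeval (uu F) g with hGdef
  have hGb : G (b : ℤ) = 1 := by
    rw [hGdef, ← hdg, aeval_uu_top, gm.leadingCoeff]
  have hGnb : G (-(b : ℤ)) = 1 := by
    rw [hGdef, ← hdg, aeval_uu_bot, gm.leadingCoeff]
  have hGhi : ∀ z : ℤ, (b : ℤ) < z → G z = 0 := by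
    intro z hz; rw [hGdef]; exact aeval_uu_support g (by rw [hdg]; right; exact hz)
  have hGlo : ∀ z : ℤ, z < -(b : ℤ) → G z = 0 := by
    intro z hz; rw [hGdef]; exact aeval_uu_support g (by rw [hdg]; left; exact hz)
  have hhG : Polynomial.aeval G h = (T ((a*b : ℕ) : ℤ) + T (-((a*b : ℕ) : ℤ)) : F[T;T⁻¹]) := by
    have := congrArg (Polynomial.aeval (uu F)) heq
    rwa [Polynomial.aeval_comp, aeval_uu_dickson, ← hGdef] at this
  have hGsymm : ∀ z : ℤ, G (-z) = G z := by
    have huuinv : invert (uu F) = uu F := by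
      rw [show uu F = T 1 + T (-1) from rfl, map_add, invert_T, invert_T]
      norm_num [add_comm]
    have hinv : invert G = G := by
      rw [hGdef, ← Polynomial.aeval_algHom_apply, huuinv]
    intro z
    conv_rhs => rw [← hinv]
    exact (invert_apply G z).symm
  have haF : (a : F) ≠ 0 := by
    rw [Ne, CharP.cast_eq_zero_iff F p]; exact hpa
  -- middle coefficients vanish
  have key : ∀ k : ℕ, ∀ j : ℤ, 0 < j → j < (b : ℤ) → (b : ℤ) - j ≤ k → G j = 0 := by
    intro k
    induction k with
    | zero => intro j h1 h2 h3; omega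
    | succ k ih =>
      intro j h1 h2 h3
      set E : F[T;T⁻¹] := G - T (b : ℤ) with hE
      have hEapp : ∀ z : ℤ, E z = G z - (T (b:ℤ) : F[T;T⁻¹]) z := fun z => rfl
      have hEj : E j = G j := by
        rw [hEapp, T_apply, if_neg (by omega), sub_zero]
      have hEhi : ∀ z : ℤ, j < z → E z = 0 := by
        intro z hz
        rcases lt_trichotomy z (b : ℤ) with hlt | heqz | hgt
        · rw [hEapp, ih z (by omega) hlt (by omega), T_apply, if_neg (by omega), sub_zero]
        · rw [hEapp, heqz, hGb, T_apply, if_pos rfl, sub_self]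
        · rw [hEapp, hGhi z hgt, T_apply, if_neg (by omega), sub_zero]
      set w : ℤ := ((a : ℤ) - 1) * (b : ℤ) + j with hw
      have hGE : G = T (b : ℤ) + E := by rw [hE]; ring
      -- power expansion
      have hGa : (G ^ a : F[T;T⁻¹]) w = (a : F) * G j := by
        rw [hGE, add_pow, AddMonoidAlgebra.coeff_sum, Finsupp.finset_sum_apply]
        rw [Finset.sum_eq_single (a - 1)]
        · have h1 : a - (a - 1) = 1 := by omega
          have h2 : (T (b:ℤ) : F[T;T⁻¹]) ^ (a-1) = T (((a-1 : ℕ) : ℤ) * b) := T_pow _ _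
          rw [h2, term_apply, h1, pow_one]
          have h3 : w - ((a-1 : ℕ) : ℤ) * b = j := by
            rw [hw]; push_cast [ha]; ring
          rw [h3, hEj]
          have h4 : a.choose (a - 1) = a := by
            rw [Nat.choose_symm ha, Nat.choose_one_right]
          rw [h4, ← hGE]
          ring
        · intro m hm hne
          rw [Finset.mem_range] at hm
          have hT2 : (T (b:ℤ) : F[T;T⁻¹]) ^ m = T (((m : ℕ) : ℤ) * b) := T_pow _ _
          rw [hT2, term_apply]
          rcases eq_or_lt_of_le (Nat.lt_succ_iff.1 hm) with hma | hma
          · -- m = a : E^0 = 1 at w - a*b ≠ 0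
            subst hma
            rw [Nat.sub_self, pow_zero, one_apply, if_neg (by
              rw [hw]; intro hcon; ring_nf at hcon; omega), zero_mul]
          · -- m ≤ a - 2 : since m ≠ a - 1 and m < a
            have hq2 : 2 ≤ a - m := by omega
            have hEq : (E ^ (a - m) : F[T;T⁻¹]) (w - (m : ℤ) * b) = 0 := by
              refine pow_apply_bound (fun z hz => hEhi z hz) (a - m) _ ?_
              have hcast : ((a - m : ℕ) : ℤ) = (a : ℤ) - m := by
                push_cast [le_of_lt hma]; ring
              have hm2 : (m : ℤ) + 2 ≤ (a : ℤ) := by exact_mod_cast (by omega : m + 2 ≤ a)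
              rw [hcast, hw]
              nlinarith [h1, h2, hm2]
            rw [hEq, zero_mul]
        · intro hmem
          exact absurd (Finset.mem_range.2 (by omega)) hmem
      -- full coefficient
      have hcoeff : (Polynomial.aeval G h : F[T;T⁻¹]) w = (a : F) * G j := by
        rw [Polynomial.aeval_eq_sum_range, AddMonoidAlgebra.coeff_sum, Finsupp.finset_sum_apply, hdh]
        rw [Finset.sum_eq_single a]
        · rw [← hdh, hm.coeff_natDegree, hdh, one_smul, hGa]
        · intro i hi hne
          rw [Finset.mem_range] at hi
          have hGi : (G ^ i : F[T;T⁻¹]) w = 0 := by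
            refine pow_apply_bound (fun z hz => hGhi z hz) i w ?_
            have hia : (i : ℤ) + 1 ≤ (a : ℤ) := by exact_mod_cast (by omega : i + 1 ≤ a)
            have hbZ : (1 : ℤ) ≤ (b : ℤ) := by exact_mod_cast hb
            rw [hw]
            nlinarith [h1, hia, hbZ]
          rw [AddMonoidAlgebra.coeff_smul_apply, hGi, smul_zero]
        · intro hmem
          exact absurd (Finset.mem_range.2 (by omega)) hmem
      have hrhs : (T ((a*b : ℕ) : ℤ) + T (-((a*b : ℕ) : ℤ)) : F[T;T⁻¹]) w = 0 := by
        have haZ : (1:ℤ) ≤ (a:ℤ) := by exact_mod_cast ha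
        have hbZ : (1:ℤ) ≤ (b:ℤ) := by exact_mod_cast hb
        have hne1 : ¬(((a*b : ℕ) : ℤ) = w) := by
          rw [hw]; push_cast; nlinarith [h1, h2, haZ, hbZ]
        have hne2 : ¬(-((a*b : ℕ) : ℤ) = w) := by
          rw [hw]; push_cast; nlinarith [h1, h2, haZ, hbZ]
        rw [AddMonoidAlgebra.coeff_add, Finsupp.add_apply, T_apply, T_apply, if_neg hne1, if_neg hne2, add_zero]
      have : (a : F) * G j = 0 := by rw [← hcoeff, hhG, hrhs]
      exact (mul_eq_zero.1 this).resolve_left haF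
  have keyneg : ∀ j : ℤ, -(b:ℤ) < j → j < 0 → G j = 0 := by
    intro j h1 h2
    rw [show j = -(-j) by ring, hGsymm, key (b.succ) (-j) (by omega) (by omega) (by omega)]
  -- characterize G
  set c : F := G 0 with hc
  have hGeq : G = Polynomial.aeval (uu F) (dickson 1 (1:F) b + Polynomial.C c) := by
    rw [map_add, aeval_uu_dickson, Polynomial.aeval_C]
    have halg : (algebraMap F F[T;T⁻¹]) c = LaurentPolynomial.C c := rfl
    rw [halg]
    apply LaurentPolynomial.ext
    intro z
    have hbZ : (1:ℤ) ≤ (b:ℤ) := by exact_mod_cast hb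
    rw [AddMonoidAlgebra.coeff_add, Finsupp.add_apply, AddMonoidAlgebra.coeff_add, Finsupp.add_apply, T_apply, T_apply, LaurentPolynomial.C_apply]
    by_cases h1 : (b:ℤ) = z
    · rw [if_pos h1, if_neg (by omega), if_neg (by omega), ← h1, hGb]; ring
    rw [if_neg h1]
    by_cases h2 : -(b:ℤ) = z
    · rw [if_pos h2, if_neg (by omega), ← h2, hGnb]; ring
    rw [if_neg h2]
    by_cases h3 : z = 0
    · rw [if_pos h3, h3, ← hc]; ring
    rw [if_neg h3]
    rcases lt_trichotomy z 0 with hz | hz | hz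
    · rcases lt_or_ge (-(b:ℤ)) z with hz2 | hz2
      · rw [keyneg z hz2 hz]; ring
      · rw [hGlo z (by omega)]; ring
    · exact absurd hz h3
    · rcases lt_or_ge z (b:ℤ) with hz2 | hz2
      · rw [key (b.succ) z hz hz2 (by omega)]; ring
      · rw [hGhi z (by omega)]; ring
  have hg2 : g = dickson 1 (1:F) b + Polynomial.C c := by
    apply aeval_uu_injective
    simp only []
    rw [← hGdef, hGeq]
  -- h part
  have hDbdeg : (dickson 1 (1:F) b).natDegree = b := dickson_natDegree hb
  have hstep : (h.comp (X + Polynomial.C c)).comp (dickson 1 (1:F) b)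
      = (dickson 1 (1:F) a).comp (dickson 1 (1:F) b) := by
    rw [Polynomial.comp_assoc, add_comp, X_comp, C_comp, ← hg2, heq, ← dickson_one_one_mul]
  have hcancel : h.comp (X + Polynomial.C c) = dickson 1 (1:F) a := by
    have hsub : ((h.comp (X + Polynomial.C c)) - dickson 1 (1:F) a).comp (dickson 1 (1:F) b) = 0 := by
      rw [sub_comp, hstep, sub_self]
    rcases Polynomial.comp_eq_zero_iff.1 hsub with h0 | ⟨_, hCb⟩
    · exact sub_eq_zero.1 h0
    · exfalso
      have := congrArg Polynomial.natDegree hCb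
      rw [hDbdeg, natDegree_C] at this
      omega
  refine ⟨c, ?_, hg2⟩
  have hXX : (X + Polynomial.C c).comp (X - Polynomial.C c) = (X : F[X]) := by
    rw [add_comp, X_comp, C_comp]; ring
  calc h = (h.comp (X + Polynomial.C c)).comp (X - Polynomial.C c) := by
        rw [Polynomial.comp_assoc, hXX, comp_X]
    _ = (dickson 1 (1:F) a).comp (X - Polynomial.C c) := by rw [hcancel]

theorem mainAux (F : Type) [Field F] [IsAlgClosed F] (p : ℕ) (hp : p.Prime) [CharP F p] :
    ∀ n : ℕ, 1 ≤ n → ∀ h g : F[X], h.Monic → g.Monic → 1 ≤ h.natDegree →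
      h.comp g = dickson 1 (1 : F) n →
      ∃ m k : ℕ, ∃ c : F, m * k = n ∧
        h = (dickson 1 (1 : F) m).comp (X - Polynomial.C c) ∧
        g = dickson 1 (1 : F) k + Polynomial.C c := by
  haveI : Fact p.Prime := ⟨hp⟩
  intro n
  induction n using Nat.strong_induction_on with
  | _ n ih =>
  intro hn h g hm gm hdh heq
  have hdeg : h.natDegree * g.natDegree = n := by
    rw [← natDegree_comp, heq, dickson_natDegree hn]
  have hb1 : 1 ≤ g.natDegree := by
    rcases Nat.eq_zero_or_pos g.natDegree with h0 | h0
    · rw [h0, mul_zero] at hdeg; omega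
    · exact h0
  by_cases hpa : p ∣ h.natDegree
  · -- wild case
    have hpn : p ∣ n := hdeg ▸ Dvd.dvd.mul_right hpa _
    obtain ⟨k', hk'⟩ := hpn
    have hp2 := hp.two_le
    have hk'pos : 1 ≤ k' := by
      rcases Nat.eq_zero_or_pos k' with h0 | h0
      · rw [h0, mul_zero] at hk'; omega
      · exact h0
    have hk'lt : k' < n := by
      rw [hk']; calc k' = 1 * k' := (one_mul k').symm
        _ < p * k' := by nlinarith
    have hDn : dickson 1 (1 : F) n = expand F p (dickson 1 (1 : F) k') := by
      rw [hk', mul_comm, dickson_one_one_mul, dickson_one_one_charP (R := F) p,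
        expand_eq_comp_X_pow]
    have hder : Polynomial.derivative (h.comp g) = 0 := by
      rw [heq, hDn, expand_eq_comp_X_pow, derivative_comp, derivative_X_pow]
      rw [CharP.cast_eq_zero F p, map_zero, zero_mul, zero_mul]
    rw [derivative_comp] at hder
    rcases mul_eq_zero.1 hder with hg0 | hh0
    · -- derivative g = 0
      have hexp : expand F p (g.contract p) = g := expand_contract p hg0 hp.ne_zero
      have hcomp : expand F p (h.comp (g.contract p)) = expand F p (dickson 1 (1:F) k') := by
        rw [← hDn, ← heq]
        conv_rhs => rw [← hexp]
        rw [expand_eq_comp_X_pow, expand_eq_comp_X_pow, Polynomial.comp_assoc]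
      have hcg : h.comp (g.contract p) = dickson 1 (1:F) k' :=
        expand_injective hp.pos hcomp
      have g1m : (g.contract p).Monic := by
        have := leadingCoeff_expand (f := g.contract p) hp.pos
        rw [hexp] at this
        rw [Monic, ← this]; exact gm
      obtain ⟨m, k₁, c, hmk, hh, hg1⟩ := ih k' hk'lt hk'pos h (g.contract p) hm g1m hdh hcg
      refine ⟨m, k₁ * p, c, ?_, hh, ?_⟩
      · rw [← mul_assoc, hmk, hk', mul_comm]
      · rw [← hexp, hg1, expand_eq_comp_X_pow, add_comp, C_comp,
          ← expand_eq_comp_X_pow]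
        congr 1
        rw [expand_eq_comp_X_pow, ← dickson_one_one_charP (R := F) p, ← dickson_one_one_mul]
    · -- (derivative h).comp g = 0
      have hh' : Polynomial.derivative h = 0 := by
        rcases Polynomial.comp_eq_zero_iff.1 hh0 with h0 | ⟨_, hgC⟩
        · exact h0
        · exfalso
          have := congrArg Polynomial.natDegree hgC
          rw [natDegree_C] at this
          omega
      set hr : F[X] := (h.contract p).map ((frobeniusEquiv F p).symm : F →+* F) with hhr
      have hpow : hr ^ p = h := by
        calc hr ^ p = Polynomial.map (frobenius F p) (expand F p hr) := (map_frobenius_expand p hr).symm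
          _ = expand F p (Polynomial.map (frobenius F p) hr) := by rw [map_expand]
          _ = expand F p (h.contract p) := by
              rw [hhr, Polynomial.map_map]
              congr 1
              · ext x
                simp [coe_frobeniusEquiv]
          _ = h := expand_contract p hh' hp.ne_zero
      have hhrm : hr.Monic := by
        have hlc : hr.leadingCoeff ^ p = 1 := by
          rw [← leadingCoeff_pow, hpow]; exact hm
        rw [Monic]
        apply frobenius_inj F p
        rw [frobenius_def, frobenius_def, hlc, one_pow]
      have hdhr : 1 ≤ hr.natDegree := by
        have hnd : p * hr.natDegree = h.natDegree := by
          rw [← hhrm.natDegree_pow, hpow]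
        rcases Nat.eq_zero_or_pos hr.natDegree with h0 | h0
        · rw [h0, mul_zero] at hnd; omega
        · exact h0
      have hDk : dickson 1 (1:F) n = (dickson 1 (1:F) k') ^ p := by
        rw [hk', dickson_one_one_mul, dickson_one_one_charP (R := F) p, X_pow_comp]
      have hcg : hr.comp g = dickson 1 (1:F) k' := by
        have h2 : (hr.comp g) ^ p = (dickson 1 (1:F) k') ^ p := by
          rw [← pow_comp, hpow, heq, hDk]
        have h3 : (hr.comp g - dickson 1 (1:F) k') ^ p = 0 := by
          rw [sub_pow_char, h2, sub_self]
        have h4 := pow_eq_zero_iff hp.ne_zero |>.1 h3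
        exact sub_eq_zero.1 h4
      obtain ⟨m', k, c, hmk, hh, hg1⟩ := ih k' hk'lt hk'pos hr g hhrm gm hdhr hcg
      refine ⟨p * m', k, c, ?_, ?_, hg1⟩
      · rw [mul_assoc, hmk, hk']
      · rw [← hpow, hh, ← pow_comp]
        congr 1
        rw [dickson_one_one_mul, dickson_one_one_charP (R := F) p, X_pow_comp]
  · -- tame case
    obtain ⟨c, hh, hg⟩ := tame p hp hdh hb1 hpa hm gm rfl rfl
      (by rw [hdeg]; exact heq)
    exact ⟨h.natDegree, g.natDegree, c, hdeg, hh, hg⟩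

end

end DicksonAux

theorem dickson_decomposition_char_p (F : Type) [Field F] [IsAlgClosed F]
    (p : ℕ) (hp : p.Prime) [CharP F p] (n : ℕ) (hn : 0 < n) (hpn : p ∣ n)
    (h g : Polynomial F) (hmonic : h.Monic) (gmonic : g.Monic)
    (hdh : 2 ≤ h.natDegree) (hdg : 1 ≤ g.natDegree)
    (heq : Polynomial.dickson 1 (1 : F) n = h.comp g) :
    ∃ (m k : ℕ) (c : F), 0 < m ∧ 0 < k ∧ m * k = n ∧
      h = (Polynomial.dickson 1 (1 : F) m).comp (Polynomial.X - Polynomial.C c) ∧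
      g = Polynomial.dickson 1 (1 : F) k + Polynomial.C c := by
  obtain ⟨m, k, c, hmk, hh, hg⟩ :=
    DicksonAux.mainAux F p hp n hn h g hmonic gmonic (by omega) heq.symm
  have hm0 : 0 < m := by
    rcases Nat.eq_zero_or_pos m with h0 | h0
    · rw [h0, zero_mul] at hmk; omega
    · exact h0
  have hk0 : 0 < k := by
    rcases Nat.eq_zero_or_pos k with h0 | h0
    · rw [h0, mul_zero] at hmk; omega
    · exact h0
  exact ⟨m, k, c, hm0, hk0, hmk, hh, hg⟩
end

section
/- Let w ∈ F_2 with trace polynomial f_w, let p be a prime and q = p^n. Suppose that over F_p the trace polynomial decomposes as f_w = h ∘ Q, where Q ∈ F_p[s,u,t], h is a univariate polynomial over F_p of degree d_1 ≥ 2, and the evaluation map z ↦ h(z) on F_q is not surjective. Then the image of the word map P_{w,q}: SL(2,q) × SL(2,q) → SL(2,q) omits at least q(q−1)·((q−1)/d_1 − 2) elements of SL(2,q). -/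
open Matrix Polynomial

lemma esymm_vanish {K : Type} [Field K] [Fintype K] (p n : ℕ) (hp : p.Prime) [CharP K p]
    (hq : Fintype.card K = p ^ n) (h' : Polynomial K) (hd1 : 1 ≤ h'.natDegree) (k : ℕ) (hk1 : 1 ≤ k)
    (hkd : h'.natDegree * k ≤ Fintype.card K - 2) :
    (Finset.univ.val.map fun z : K => Polynomial.eval z h').esymm k = 0 := by
  classical
  set q := Fintype.card K with hqdef
  set d := h'.natDegree with hddef
  have hq2 : 2 ≤ q := Fintype.one_lt_card
  have hq1pos : 0 < q - 1 := by omega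
  -- generator of Kˣ
  obtain ⟨g0, hg0⟩ := IsCyclic.exists_generator (α := Kˣ)
  have horder : orderOf ((g0 : Kˣ) : K) = q - 1 := by
    rw [orderOf_units, orderOf_eq_card_of_forall_mem_zpowers hg0, Nat.card_eq_fintype_card,
      Fintype.card_units]
  have hprim : IsPrimitiveRoot ((g0 : Kˣ) : K) (q - 1) := by
    rw [← horder]; exact IsPrimitiveRoot.orderOf _
  -- the cyclotomic ring
  set Φ : Polynomial ℤ := Polynomial.cyclotomic (q - 1) ℤ with hΦdef
  have hirr : Irreducible Φ := Polynomial.cyclotomic.irreducible hq1pos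
  have hprime : Prime Φ := hirr.prime
  set I : Ideal (Polynomial ℤ) := Ideal.span {Φ} with hIdef
  haveI hIprime : I.IsPrime := (Ideal.span_singleton_prime hprime.ne_zero).mpr hprime
  haveI : IsDomain (Polynomial ℤ ⧸ I) := (Ideal.Quotient.isDomain_iff_prime I).mpr hIprime
  set R₀ := Polynomial ℤ ⧸ I with hR₀def
  set π : Polynomial ℤ →+* R₀ := Ideal.Quotient.mk I with hπdef
  set x : R₀ := π Polynomial.X with hxdef
  have hxq : x ^ (q - 1) = 1 := by
    have hdvd : Φ ∣ Polynomial.X ^ (q - 1) - 1 := by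
      rw [← Polynomial.prod_cyclotomic_eq_X_pow_sub_one hq1pos ℤ]
      exact Finset.dvd_prod_of_mem _ (Nat.mem_divisors_self _ (by omega))
    have : π (Polynomial.X ^ (q - 1) - 1) = 0 :=
      Ideal.Quotient.eq_zero_iff_mem.mpr (Ideal.mem_span_singleton.mpr hdvd)
    rw [_root_.map_sub, _root_.map_pow, _root_.map_one] at this
    rw [hxdef]
    linear_combination this
  -- NeZero instance for isRoot_cyclotomic_iff
  haveI : NeZero ((q - 1 : ℕ) : K) := by
    constructor
    intro h0
    have hpdvd : p ∣ q - 1 := (CharP.cast_eq_zero_iff K p _).mp h0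
    have hpq : p ∣ q := by rw [hq]; exact dvd_pow_self p (by
      rintro rfl
      simp at hq
      omega)
    have : p ∣ 1 := by
      have := Nat.dvd_sub hpq hpdvd
      simpa [Nat.sub_sub_self (by omega : 1 ≤ q)] using this
    exact hp.one_lt.ne' (Nat.dvd_one.mp this)
  -- the reduction map ψ : R₀ →+* K
  have hkerΦ : ∀ a ∈ I, Polynomial.eval₂RingHom (Int.castRingHom K) ((g0 : Kˣ) : K) a = 0 := by
    intro a ha
    obtain ⟨b, rfl⟩ := Ideal.mem_span_singleton.mp ha
    rw [_root_.map_mul]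
    have hΦ0 : Polynomial.eval₂ (Int.castRingHom K) ((g0 : Kˣ) : K) Φ = 0 := by
      rw [Polynomial.eval₂_eq_eval_map, hΦdef, Polynomial.map_cyclotomic]
      exact (Polynomial.isRoot_cyclotomic_iff).mpr hprim
    simp [Polynomial.coe_eval₂RingHom, hΦ0]
  set ψ : R₀ →+* K := Ideal.Quotient.lift I (Polynomial.eval₂RingHom (Int.castRingHom K) ((g0 : Kˣ) : K)) hkerΦ with hψdef
  have hψx : ψ x = ((g0 : Kˣ) : K) := by
    rw [hψdef, hxdef, hπdef, Ideal.Quotient.lift_mk]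
    simp
  -- integers inject into R₀
  have hint : ∀ c : ℤ, (c : R₀) = 0 → c = 0 := by
    intro c hc
    by_contra hc0
    have h1 : ((c : Polynomial ℤ) : Polynomial ℤ) ∈ I := by
      have : π ((c : ℤ) : Polynomial ℤ) = (c : R₀) := _root_.map_intCast π c
      rw [← Ideal.Quotient.eq_zero_iff_mem]
      rw [hπdef] at this
      rw [this, hc]
    have hdvd : Φ ∣ (c : Polynomial ℤ) := Ideal.mem_span_singleton.mp h1
    have hC : ((c : ℤ) : Polynomial ℤ) ≠ 0 := by
      simpa using hc0
    have := Polynomial.natDegree_le_of_dvd hdvd hC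
    rw [hΦdef, Polynomial.natDegree_cyclotomic] at this
    have htot : 0 < (q - 1).totient := Nat.totient_pos.mpr hq1pos
    have : ((c : ℤ) : Polynomial ℤ).natDegree = 0 := by
      have := Polynomial.natDegree_intCast (R := ℤ) c
      simpa using this
    omega
  -- surjectivity of ψ
  have hψs : Function.Surjective ψ := by
    intro c
    by_cases hc : c = 0
    · exact ⟨0, by rw [_root_.map_zero, hc]⟩
    · have hu : Units.mk0 c hc ∈ Subgroup.zpowers g0 := hg0 _
      have : Units.mk0 c hc ∈ Submonoid.powers g0 :=
        ((isOfFinOrder_of_finite g0).mem_powers_iff_mem_zpowers).mpr hu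
      obtain ⟨e, he⟩ := this
      have he' : g0 ^ e = Units.mk0 c hc := he
      refine ⟨x ^ e, ?_⟩
      rw [_root_.map_pow, hψx, ← Units.val_pow_eq_pow_val, he']
      rfl
  set L : K → R₀ := Function.surjInv hψs with hLdef
  have hL : ∀ c : K, ψ (L c) = c := fun c => Function.surjInv_eq hψs c
  -- lift of h'
  set H : Polynomial R₀ :=
    ∑ i ∈ Finset.range (d + 1), Polynomial.C (L (h'.coeff i)) * Polynomial.X ^ i with hHdef
  have hHd : H.natDegree ≤ d := by
    apply Polynomial.natDegree_sum_le_of_forall_le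
    intro i hi
    refine le_trans (Polynomial.natDegree_mul_le) ?_
    simp only [Polynomial.natDegree_C, Polynomial.natDegree_X_pow, zero_add]
    exact Nat.lt_succ_iff.mp (Finset.mem_range.mp hi)
  have hev : ∀ γ : R₀, ψ (H.eval γ) = h'.eval (ψ γ) := by
    intro γ
    have h1 : ψ (H.eval γ) = Polynomial.eval₂ ψ (ψ γ) H := (Polynomial.eval₂_at_apply ψ γ).symm
    rw [h1, hHdef]
    rw [Polynomial.eval₂_finset_sum]
    have h2 : h'.eval (ψ γ) = ∑ i ∈ Finset.range (d + 1), h'.coeff i * (ψ γ) ^ i :=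
      Polynomial.eval_eq_sum_range _
    rw [h2]
    refine Finset.sum_congr rfl fun i _ => ?_
    rw [Polynomial.eval₂_mul, Polynomial.eval₂_C, Polynomial.eval₂_X_pow, hL]
  -- the Teichmüller points
  set γf : Option (Fin (q - 1)) → R₀ := fun o => o.elim 0 (fun e => x ^ (e : ℕ)) with hγfdef
  have hcardσ : Fintype.card (Option (Fin (q - 1))) = q := by
    rw [Fintype.card_option, Fintype.card_fin]; omega
  have hSsum : ∀ j : ℕ, 1 ≤ j → j ≤ q - 2 → ∑ i : Option (Fin (q - 1)), (γf i) ^ j = 0 := by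
    intro j hj1 hj2
    rw [Fintype.sum_option]
    have h0 : (γf none) ^ j = 0 := by
      simp [hγfdef, zero_pow (by omega : j ≠ 0)]
    rw [h0, zero_add]
    have hyne : x ^ j ≠ 1 := by
      intro hxj
      have : ψ (x ^ j) = 1 := by rw [hxj, _root_.map_one]
      rw [_root_.map_pow, hψx] at this
      exact hprim.pow_ne_one_of_pos_of_lt (by omega) (by omega) this
    have hsum : (∑ e : Fin (q - 1), (x ^ j) ^ (e : ℕ)) * (x ^ j - 1) = 0 := by
      rw [Fin.sum_univ_eq_sum_range, geom_sum_mul, ← pow_mul, mul_comm j, pow_mul, hxq, one_pow,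
        sub_self]
    have := mul_eq_zero.mp hsum
    rcases this with h | h
    · rw [← h]
      refine Finset.sum_congr rfl fun e _ => ?_
      show (x ^ (e : ℕ)) ^ j = (x ^ j) ^ (e : ℕ)
      rw [← pow_mul, ← pow_mul, mul_comm]
    · exact absurd (sub_eq_zero.mp h) hyne
  set vR : Option (Fin (q - 1)) → R₀ := fun i => H.eval (γf i) with hvRdef
  -- power sums are divisible by q
  have hPsum : ∀ j : ℕ, 1 ≤ j → d * j ≤ q - 2 →
      (∑ i : Option (Fin (q - 1)), vR i ^ j) ∈ Ideal.span {((q : ℕ) : R₀)} := by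
    intro j hj1 hjd
    have hdeg : (H ^ j).natDegree < q - 1 := by
      calc (H ^ j).natDegree ≤ j * H.natDegree := Polynomial.natDegree_pow_le
        _ ≤ j * d := Nat.mul_le_mul_left j hHd
        _ ≤ q - 2 := by rw [mul_comm]; exact hjd
        _ < q - 1 := by omega
    have heval : ∀ γ : R₀, (H.eval γ) ^ j = ∑ i ∈ Finset.range (q - 1), (H ^ j).coeff i * γ ^ i := by
      intro γ
      rw [← Polynomial.eval_pow]
      exact Polynomial.eval_eq_sum_range' hdeg γ
    have heq : (∑ i : Option (Fin (q - 1)), vR i ^ j)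
        = ∑ l ∈ Finset.range (q - 1), (H ^ j).coeff l * (∑ i : Option (Fin (q - 1)), (γf i) ^ l) := by
      rw [show (∑ i : Option (Fin (q - 1)), vR i ^ j)
          = ∑ i : Option (Fin (q - 1)), ∑ l ∈ Finset.range (q - 1), (H ^ j).coeff l * (γf i) ^ l
        from Finset.sum_congr rfl fun i _ => heval (γf i)]
      rw [Finset.sum_comm]
      exact Finset.sum_congr rfl fun l _ => by rw [Finset.mul_sum]
    rw [heq]
    apply Ideal.sum_mem
    intro l hl
    rcases Nat.eq_zero_or_pos l with rfl | hlpos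
    · have : (∑ i : Option (Fin (q - 1)), (γf i) ^ (0:ℕ)) = ((q : ℕ) : R₀) := by
        simp only [pow_zero]
        rw [Finset.sum_const, Finset.card_univ, hcardσ, nsmul_eq_mul, mul_one]
      rw [this]
      exact Ideal.mul_mem_left _ _ (Ideal.mem_span_singleton_self _)
    · have : (∑ i : Option (Fin (q - 1)), (γf i) ^ l) = 0 :=
        hSsum l hlpos (by have := Finset.mem_range.mp hl; omega)
      rw [this, mul_zero]
      exact Ideal.zero_mem _
  -- Newton's identities
  have hE : ∀ j : ℕ, 1 ≤ j → d * j ≤ q - 2 →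
      ((j : R₀) * MvPolynomial.aeval vR (MvPolynomial.esymm (Option (Fin (q - 1))) ℤ j))
        ∈ Ideal.span {((q : ℕ) : R₀)} := by
    intro j hj1 hjd
    have hid := congrArg (MvPolynomial.aeval vR)
      (MvPolynomial.mul_esymm_eq_sum (Option (Fin (q - 1))) ℤ j)
    rw [_root_.map_mul, _root_.map_natCast, _root_.map_mul, _root_.map_pow, _root_.map_neg, _root_.map_one, _root_.map_sum] at hid
    rw [hid]
    apply Ideal.mul_mem_left
    apply Ideal.sum_mem
    intro a ha
    rw [_root_.map_mul, _root_.map_mul, _root_.map_pow, _root_.map_neg, _root_.map_one]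
    apply Ideal.mul_mem_left
    have hpsum : MvPolynomial.aeval vR (MvPolynomial.psum (Option (Fin (q - 1))) ℤ a.2)
        = ∑ i : Option (Fin (q - 1)), vR i ^ a.2 := by
      simp [MvPolynomial.psum, _root_.map_sum, _root_.map_pow, MvPolynomial.aeval_X]
    rw [hpsum]
    have hmem := Finset.mem_filter.mp ha
    have hanti := Finset.HasAntidiagonal.mem_antidiagonal.mp hmem.1
    have ha2 : 1 ≤ a.2 ∧ a.2 ≤ j := by omega
    exact hPsum a.2 ha2.1 (le_trans (Nat.mul_le_mul_left d ha2.2) hjd)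
  -- kill e_j mod p
  have hψE : ∀ j : ℕ, 1 ≤ j → d * j ≤ q - 2 →
      ψ (MvPolynomial.aeval vR (MvPolynomial.esymm (Option (Fin (q - 1))) ℤ j)) = 0 := by
    intro j hj1 hjd
    set E := MvPolynomial.aeval vR (MvPolynomial.esymm (Option (Fin (q - 1))) ℤ j) with hEdef
    obtain ⟨B, hB⟩ := Ideal.mem_span_singleton'.mp (hE j hj1 hjd)
    obtain ⟨a, j', hpj', hjeq⟩ := Nat.exists_eq_pow_mul_and_not_dvd (show j ≠ 0 by omega) p hp.ne_one
    have hj'pos : 0 < j' := by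
      rcases Nat.eq_zero_or_pos j' with rfl | h
      · omega
      · exact h
    have hjq : j ≤ q - 2 := le_trans (Nat.le_mul_of_pos_left j (by omega)) hjd
    have han : a < n := by
      have h1 : p ^ a ≤ j := by
        rw [hjeq]; exact Nat.le_mul_of_pos_right _ hj'pos
      have h2 : p ^ a < p ^ n := by omega
      exact (Nat.pow_lt_pow_iff_right hp.one_lt).mp h2
    have c1 : ((j : ℕ) : R₀) = ((p : ℕ) : R₀) ^ a * ((j' : ℕ) : R₀) := by
      rw [hjeq, Nat.cast_mul, Nat.cast_pow]
    have c2 : ((q : ℕ) : R₀) = ((p : ℕ) : R₀) ^ a * ((p : ℕ) : R₀) ^ (n - a) := by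
      rw [hq]; push_cast; rw [← pow_add]; congr 1; omega
    have key : ((p : ℕ) : R₀) ^ a * (((j' : ℕ) : R₀) * E)
        = ((p : ℕ) : R₀) ^ a * (((p : ℕ) : R₀) ^ (n - a) * B) := by
      calc ((p : ℕ) : R₀) ^ a * (((j' : ℕ) : R₀) * E) = ((j : ℕ) : R₀) * E := by rw [c1]; ring
        _ = B * ((q : ℕ) : R₀) := hB.symm
        _ = _ := by rw [c2]; ring
    have hpa : ((p : ℕ) : R₀) ^ a ≠ 0 := by
      intro h0
      have h1 : (((p ^ a : ℕ) : ℤ) : R₀) = 0 := by push_cast; push_cast at h0; exact h0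
      have h2 := hint _ h1
      have : (p : ℤ) ^ a ≠ 0 := pow_ne_zero _ (by exact_mod_cast hp.pos.ne')
      push_cast at h2
      exact this h2
    have hmain := mul_left_cancel₀ hpa key
    have hψmain := congrArg ψ hmain
    rw [_root_.map_mul, _root_.map_mul, _root_.map_pow, _root_.map_natCast, _root_.map_natCast] at hψmain
    have hp0 : ((p : ℕ) : K) = 0 := CharP.cast_eq_zero K p
    rw [hp0, zero_pow (by omega : n - a ≠ 0), zero_mul] at hψmain
    have hj'0 : ((j' : ℕ) : K) ≠ 0 := by
      intro h0
      exact hpj' ((CharP.cast_eq_zero_iff K p _).mp h0)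
    rcases mul_eq_zero.mp hψmain with h | h
    · exact absurd h hj'0
    · exact h
  -- transfer to K
  have h1 : ψ (MvPolynomial.aeval vR (MvPolynomial.esymm (Option (Fin (q - 1))) ℤ k)) =
      MvPolynomial.aeval (fun i => ψ (vR i)) (MvPolynomial.esymm (Option (Fin (q - 1))) ℤ k) := by
    rw [MvPolynomial.aeval_def, MvPolynomial.aeval_def, MvPolynomial.eval₂_comp_left ψ]
    congr 1
    exact RingHom.ext_int _ _
  set wmap : Option (Fin (q - 1)) → K := fun i => ψ (γf i) with hwmapdef
  have h2 : (fun i => ψ (vR i)) = (fun z : K => h'.eval z) ∘ wmap := by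
    funext i; exact hev (γf i)
  have hw : ∀ e : Fin (q - 1), wmap (some e) = ((g0 : Kˣ) : K) ^ (e : ℕ) := by
    intro e
    show ψ (x ^ (e : ℕ)) = _
    rw [_root_.map_pow, hψx]
  have hwnone : wmap none = 0 := by
    show ψ 0 = 0
    exact _root_.map_zero ψ
  have hwinj : Function.Injective wmap := by
    intro i1 i2 hi
    rcases i1 with _ | e1 <;> rcases i2 with _ | e2
    · rfl
    · exfalso; rw [hwnone, hw e2] at hi
      exact (pow_ne_zero _ (Units.ne_zero g0)) hi.symm
    · exfalso; rw [hwnone, hw e1] at hi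
      exact (pow_ne_zero _ (Units.ne_zero g0)) hi
    · rw [hw e1, hw e2] at hi
      exact congrArg some (Fin.ext (hprim.pow_inj e1.isLt e2.isLt hi))
  have himg : Finset.image wmap Finset.univ = Finset.univ :=
    Finset.eq_univ_of_card _ (by
      rw [Finset.card_image_of_injective _ hwinj, Finset.card_univ, hcardσ])
  have h3 : Multiset.map wmap Finset.univ.val = (Finset.univ : Finset K).val := by
    have hnodup : (Multiset.map wmap Finset.univ.val).Nodup := Finset.univ.nodup.map hwinj
    calc Multiset.map wmap Finset.univ.val
        = (Multiset.map wmap Finset.univ.val).dedup := (Multiset.dedup_eq_self.mpr hnodup).symm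
      _ = (Finset.image wmap Finset.univ).val := by rw [Finset.image_val]
      _ = (Finset.univ : Finset K).val := by rw [himg]
  have htrans : ψ (MvPolynomial.aeval vR (MvPolynomial.esymm (Option (Fin (q - 1))) ℤ k)) =
      (Finset.univ.val.map fun z : K => Polynomial.eval z h').esymm k := by
    rw [h1, MvPolynomial.aeval_esymm_eq_multiset_esymm, h2, ← Multiset.map_map, h3]
  rw [← htrans]
  exact hψE k hk1 hkd

lemma wan_bound {K : Type} [Field K] [Fintype K] [DecidableEq K] (p n : ℕ) (hp : p.Prime) [CharP K p]
    (hq : Fintype.card K = p ^ n) (h' : Polynomial K) (hd1 : 1 ≤ h'.natDegree)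
    (hns : ¬ Function.Surjective fun z : K => Polynomial.eval z h') :
    Fintype.card K - 1 ≤
      h'.natDegree * ((Finset.univ.image fun z : K => Polynomial.eval z h')ᶜ).card := by
  classical
  set q := Fintype.card K with hqdef
  set d := h'.natDegree with hddef
  have hq2 : 2 ≤ q := Fintype.one_lt_card
  set m : ℕ := (q - 2) / d + 1 with hmdef
  have hmd : d * (m - 1) ≤ q - 2 := by
    rw [hmdef]
    simp only [Nat.add_sub_cancel]
    rw [mul_comm]
    exact Nat.div_mul_le_self _ _
  have hm1 : m ≤ q - 1 := by
    have := Nat.div_le_self (q - 2) d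
    omega
  set MS : Multiset K := Finset.univ.val.map (fun z : K => Polynomial.eval z h') with hMSdef
  have hMScard : Multiset.card MS = q := by
    rw [hMSdef, Multiset.card_map, ← Finset.card_def, Finset.card_univ]
  set Pb : Polynomial K := (MS.map fun t => Polynomial.X - Polynomial.C t).prod with hPbdef
  have hmon : ∀ f ∈ MS.map fun t => Polynomial.X - Polynomial.C t, f.Monic := by
    intro f hf
    obtain ⟨t, _, rfl⟩ := Multiset.mem_map.mp hf
    exact Polynomial.monic_X_sub_C t
  have hPbmonic : Pb.Monic :=
    Polynomial.monic_multiset_prod_of_monic MS _ (fun t _ => Polynomial.monic_X_sub_C t)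
  have hPbdeg : Pb.natDegree = q := by
    rw [hPbdef, Polynomial.natDegree_multiset_prod_of_monic _ hmon]
    rw [Multiset.map_map]
    have : ((MS.map fun t => (Polynomial.X - Polynomial.C t).natDegree)).sum
        = ((MS.map fun _ => (1 : ℕ))).sum := by
      congr 1
      exact Multiset.map_congr rfl fun t _ => Polynomial.natDegree_X_sub_C t
    rw [show (Polynomial.natDegree ∘ fun t => Polynomial.X - Polynomial.C t)
        = fun t : K => (Polynomial.X - Polynomial.C t).natDegree from rfl, this]
    rw [Multiset.map_const', Multiset.sum_replicate, hMScard, smul_eq_mul, mul_one]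
  have hcoeff : ∀ j, 1 ≤ j → j ≤ m - 1 → Pb.coeff (q - j) = 0 := by
    intro j hj1 hjm
    have hle : q - j ≤ Multiset.card MS := by rw [hMScard]; omega
    rw [hPbdef, Multiset.prod_X_sub_C_coeff MS hle, hMScard]
    have hcj : q - (q - j) = j := by omega
    rw [hcj]
    have : MS.esymm j = 0 := by
      rw [hMSdef]
      exact esymm_vanish p n hp hq h' hd1 j hj1
        (le_trans (Nat.mul_le_mul_left d hjm) hmd)
    rw [this, mul_zero]
  set D : Polynomial K := Pb - (Polynomial.X ^ q - Polynomial.X) with hDdef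
  have hDdeg : D.natDegree ≤ q - m := by
    rw [Polynomial.natDegree_le_iff_coeff_eq_zero]
    intro N hN
    rw [hDdef, Polynomial.coeff_sub, Polynomial.coeff_sub]
    rcases lt_trichotomy N q with h | rfl | h
    · have hPbN : Pb.coeff N = 0 := by
        have h1 : 1 ≤ q - N := by omega
        have h2 : q - N ≤ m - 1 := by omega
        have := hcoeff (q - N) h1 h2
        rwa [show q - (q - N) = N by omega] at this
      simp only [hPbN, Polynomial.coeff_X_pow, Polynomial.coeff_X]
      split_ifs <;> first | (exfalso; omega) | ring
    · have hPbN : Pb.coeff q = 1 := by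
        have := hPbmonic.coeff_natDegree
        rwa [hPbdeg] at this
      simp only [hPbN, Polynomial.coeff_X_pow, Polynomial.coeff_X]
      split_ifs <;> first | (exfalso; omega) | ring
    · have hPbN : Pb.coeff N = 0 := Polynomial.coeff_eq_zero_of_natDegree_lt (by omega)
      simp only [hPbN, Polynomial.coeff_X_pow, Polynomial.coeff_X]
      split_ifs <;> first | (exfalso; omega) | ring
  have hevalPb : ∀ c : K, Pb.eval c = (MS.map fun t => c - t).prod := by
    intro c
    rw [hPbdef, Polynomial.eval_multiset_prod, Multiset.map_map]
    congr 1
    exact Multiset.map_congr rfl fun t _ => by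
      simp [Polynomial.eval_sub, Polynomial.eval_X, Polynomial.eval_C]
  have hD0 : D ≠ 0 := by
    intro h0
    apply hns
    intro c
    have hPbX : Pb = Polynomial.X ^ q - Polynomial.X := by
      have := sub_eq_zero.mp h0
      exact this
    have hc : Pb.eval c = 0 := by
      rw [hPbX]
      simp only [Polynomial.eval_sub, Polynomial.eval_pow, Polynomial.eval_X]
      rw [hqdef, FiniteField.pow_card, sub_self]
    rw [hevalPb] at hc
    have := Multiset.prod_eq_zero_iff.mp hc
    obtain ⟨t, ht, hct⟩ := Multiset.mem_map.mp this
    obtain ⟨z, _, rfl⟩ := Multiset.mem_map.mp ht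
    exact ⟨z, by linear_combination -hct⟩
  set VF : Finset K := Finset.univ.image (fun z : K => Polynomial.eval z h') with hVFdef
  have hVFroots : VF ⊆ D.roots.toFinset := by
    intro c hc
    rw [Multiset.mem_toFinset, Polynomial.mem_roots hD0]
    obtain ⟨z, _, rfl⟩ := Finset.mem_image.mp hc
    have hPb0 : Pb.eval (Polynomial.eval z h') = 0 := by
      rw [hevalPb]
      apply Multiset.prod_eq_zero
      rw [Multiset.mem_map]
      exact ⟨Polynomial.eval z h', Multiset.mem_map.mpr ⟨z, Finset.mem_univ z, rfl⟩, sub_self _⟩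
    show D.eval _ = 0
    rw [hDdef]
    simp only [Polynomial.eval_sub, Polynomial.eval_pow, Polynomial.eval_X, hPb0]
    rw [hqdef, FiniteField.pow_card]
    ring
  have hVFcard : VF.card ≤ q - m :=
    le_trans (Finset.card_le_card hVFroots)
      (le_trans (Multiset.toFinset_card_le _) (le_trans (Polynomial.card_roots' D) hDdeg))
  have hcompl : m ≤ (VFᶜ).card := by
    rw [Finset.card_compl]
    omega
  have harith : q - 1 ≤ d * m := by
    have h1 := Nat.div_add_mod (q - 2) d
    have h2 : (q - 2) % d < d := Nat.mod_lt _ (by omega)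
    have : d * m = d * ((q - 2) / d) + d := by rw [hmdef]; ring
    omega
  calc q - 1 ≤ d * m := harith
    _ ≤ d * (VFᶜ).card := Nat.mul_le_mul_left d hcompl

theorem word_map_image_omits_values (w : FreeGroup (Fin 2))
    (f : MvPolynomial (Fin 3) ℤ) (hf : IsTracePolynomial w f)
    (p : ℕ) (hp : p.Prime) (n : ℕ) (hn : 0 < n)
    (Q : MvPolynomial (Fin 3) (ZMod p)) (h : Polynomial (ZMod p)) (d₁ : ℕ)
    (hd : h.natDegree = d₁) (hd2 : 2 ≤ d₁)
    (hdec : MvPolynomial.map (Int.castRingHom (ZMod p)) f = Polynomial.aeval Q h)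
    (hns : letI : Fact p.Prime := ⟨hp⟩
      ¬ Function.Surjective fun z : GaloisField p n => Polynomial.aeval z h) :
    letI : Fact p.Prime := ⟨hp⟩
    ((p : ℝ) ^ n * ((p : ℝ) ^ n - 1)) * (((p : ℝ) ^ n - 1) / d₁ - 2) ≤
      Nat.card ((Set.range (wordMap w (GaloisField p n)))ᶜ : Set (SL2 (GaloisField p n))) := by
  letI : Fact p.Prime := ⟨hp⟩
  classical
  show ((p : ℝ) ^ n * ((p : ℝ) ^ n - 1)) * (((p : ℝ) ^ n - 1) / d₁ - 2) ≤
      Nat.card ((Set.range (wordMap w (GaloisField p n)))ᶜ : Set (SL2 (GaloisField p n)))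
  replace hns : ¬ Function.Surjective fun z : GaloisField p n => Polynomial.aeval z h := hns
  set K := GaloisField p n with hKdef
  haveI : Fintype K := Fintype.ofFinite K
  have hqcard : Fintype.card K = p ^ n := by
    rw [← Nat.card_eq_fintype_card]
    exact GaloisField.card p n hn.ne'
  set q := p ^ n with hqdef
  have hq2 : 2 ≤ q := by
    have : 1 < p ^ n := Nat.one_lt_pow hn.ne' hp.one_lt
    omega
  set h' : Polynomial K := h.map (algebraMap (ZMod p) K) with hh'def
  have halg : Function.Injective (algebraMap (ZMod p) K) := (algebraMap (ZMod p) K).injective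
  have hd' : h'.natDegree = d₁ := by
    rw [hh'def, Polynomial.natDegree_map_eq_of_injective halg, hd]
  have hphi : ∀ z : K, (Polynomial.aeval z h : K) = h'.eval z := by
    intro z
    rw [hh'def, Polynomial.eval_map]
    exact Polynomial.aeval_def z h
  have hns' : ¬ Function.Surjective fun z : K => h'.eval z := by
    intro hsurj
    apply hns
    intro c
    obtain ⟨z, hz⟩ := hsurj c
    refine ⟨z, ?_⟩
    show (Polynomial.aeval z h : K) = c
    rw [hphi]
    exact hz
  have hwan := wan_bound p n hp hqcard h' (by rw [hd']; omega) hns'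
  rw [hqcard, hd'] at hwan
  -- traces of elements in the image of the word map
  have htr : ∀ A : SL2 K, A ∈ Set.range (wordMap w K) →
      ∃ v : K, Matrix.trace ((A : SL2 K) : Matrix (Fin 2) (Fin 2) K) = Polynomial.aeval v h := by
    rintro A ⟨⟨g1, g2⟩, rfl⟩
    have h0 := hf K g1 g2
    refine ⟨MvPolynomial.aeval (trPoint g1 g2) Q, ?_⟩
    show Matrix.trace ((wordEval w g1 g2 : SL2 K) : Matrix (Fin 2) (Fin 2) K) = _
    rw [h0]
    have hmap2 : MvPolynomial.map (Int.castRingHom K) f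
        = MvPolynomial.map (algebraMap (ZMod p) K)
            (MvPolynomial.map (Int.castRingHom (ZMod p)) f) := by
      rw [MvPolynomial.map_map]
      congr 1
    rw [hmap2, hdec, MvPolynomial.eval_map, ← MvPolynomial.aeval_def]
    exact (Polynomial.aeval_algHom_apply (MvPolynomial.aeval (trPoint g1 g2)) Q h).symm
  set Nfin : Finset K := (Finset.univ.image fun z : K => h'.eval z)ᶜ with hNfindef
  -- the injection into the complement of the image
  have hdet : ∀ (t a : K) (b : Kˣ),
      Matrix.det !![a, (b : K); ((b⁻¹ : Kˣ) : K) * (a * (t - a) - 1), t - a] = 1 := by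
    intro t a b
    rw [Matrix.det_fin_two_of]
    calc a * (t - a) - (b : K) * (((b⁻¹ : Kˣ) : K) * (a * (t - a) - 1))
        = a * (t - a) - ((b : K) * ((b⁻¹ : Kˣ) : K)) * (a * (t - a) - 1) := by ring
      _ = 1 := by rw [Units.mul_inv]; ring
  set F : {c : K // c ∈ Nfin} × K × Kˣ → SL2 K := fun z =>
    ⟨!![z.2.1, (z.2.2 : K); ((z.2.2⁻¹ : Kˣ) : K) * (z.2.1 * (z.1.1 - z.2.1) - 1), z.1.1 - z.2.1],
      hdet z.1.1 z.2.1 z.2.2⟩ with hFdef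
  have htrF : ∀ z, Matrix.trace ((F z : SL2 K) : Matrix (Fin 2) (Fin 2) K) = z.1.1 := by
    intro z
    show Matrix.trace !![z.2.1, (z.2.2 : K);
      ((z.2.2⁻¹ : Kˣ) : K) * (z.2.1 * (z.1.1 - z.2.1) - 1), z.1.1 - z.2.1] = z.1.1
    rw [Matrix.trace_fin_two_of]
    ring
  have hFmem : ∀ z, F z ∈ ((Set.range (wordMap w K))ᶜ : Set (SL2 K)) := by
    intro z
    intro hmem
    obtain ⟨v, hv⟩ := htr (F z) hmem
    rw [htrF] at hv
    have hmem2 : z.1.1 ∈ (Finset.univ.image fun z : K => h'.eval z) :=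
      Finset.mem_image.mpr ⟨v, Finset.mem_univ v, by rw [← hphi]; exact hv.symm⟩
    have hcompl := z.1.2
    rw [Finset.mem_compl] at hcompl
    exact hcompl hmem2
  have hFinj : Function.Injective F := by
    intro z1 z2 hz
    have hM : ((F z1 : SL2 K) : Matrix (Fin 2) (Fin 2) K)
        = ((F z2 : SL2 K) : Matrix (Fin 2) (Fin 2) K) := by rw [hz]
    have h00 : z1.2.1 = z2.2.1 := by simpa [hFdef] using congrFun (congrFun hM 0) 0
    have h01 : (z1.2.2 : K) = (z2.2.2 : K) := by simpa [hFdef] using congrFun (congrFun hM 0) 1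
    have h11 : z1.1.1 - z1.2.1 = z2.1.1 - z2.2.1 := by simpa [hFdef] using congrFun (congrFun hM 1) 1
    have ht : z1.1.1 = z2.1.1 := by
      have := h11
      rw [h00] at this
      linear_combination this
    refine Prod.ext (Subtype.ext ht) (Prod.ext h00 (Units.ext h01))
  set CP := ((Set.range (wordMap w K))ᶜ : Set (SL2 K)) with hCPdef
  have hinjcard : Nat.card ({c : K // c ∈ Nfin} × K × Kˣ) ≤ Nat.card CP := by
    apply Nat.card_le_card_of_injective (fun z => (⟨F z, hFmem z⟩ : CP))
    intro z1 z2 h12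
    exact hFinj (Subtype.ext_iff.mp h12)
  have hcardT : Nat.card ({c : K // c ∈ Nfin} × K × Kˣ) = Nfin.card * (q * (q - 1)) := by
    rw [Nat.card_prod, Nat.card_prod, Nat.card_eq_fintype_card, Nat.card_eq_fintype_card,
      Nat.card_eq_fintype_card, Fintype.card_coe,
      (by convert Fintype.card_units (α := K) : Fintype.card Kˣ = Fintype.card K - 1), hqcard]
  rw [hcardT] at hinjcard
  -- final arithmetic over ℝ
  have hrr : ((q : ℝ) - 1) / (d₁ : ℝ) - 2 ≤ (Nfin.card : ℝ) := by
    have hd₁pos : (0 : ℝ) < (d₁ : ℝ) := by positivity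
    have hr : (q : ℝ) - 1 ≤ (d₁ : ℝ) * (Nfin.card : ℝ) := by
      have := hwan
      have hcast : ((q - 1 : ℕ) : ℝ) ≤ ((d₁ * Nfin.card : ℕ) : ℝ) := Nat.cast_le.mpr this
      push_cast at hcast
      rw [Nat.cast_sub (by omega : 1 ≤ q)] at hcast
      push_cast at hcast
      linarith
    have : ((q : ℝ) - 1) / (d₁ : ℝ) ≤ (Nfin.card : ℝ) := by
      rw [div_le_iff₀ hd₁pos]
      linarith
    linarith
  have hq1R : (1 : ℝ) ≤ (q : ℝ) := by
    have : (1 : ℕ) ≤ q := by omega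
    exact_mod_cast this
  have hnonneg : (0 : ℝ) ≤ (q : ℝ) * ((q : ℝ) - 1) := by nlinarith
  have hqR : ((p : ℝ)) ^ n = (q : ℝ) := by
    rw [hqdef]
    push_cast
    ring
  rw [hqR]
  calc (q : ℝ) * ((q : ℝ) - 1) * (((q : ℝ) - 1) / (d₁ : ℝ) - 2)
      ≤ (q : ℝ) * ((q : ℝ) - 1) * (Nfin.card : ℝ) :=
        mul_le_mul_of_nonneg_left hrr hnonneg
    _ = ((Nfin.card * (q * (q - 1)) : ℕ) : ℝ) := by
        rw [Nat.cast_mul, Nat.cast_mul, Nat.cast_sub (by omega : 1 ≤ q)]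
        push_cast
        ring
    _ ≤ (Nat.card CP : ℝ) := Nat.cast_le.mpr hinjcard
end
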